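/- Let G be a complete multipartite graph with parts V_1,…,V_r. If at least two of the parts have odd size, then G has no even sequences, i.e., η(G) = 0. -/

import Mathlib

/-- The number of edges of the subgraph of `G` induced by the vertex set `S`. -/
noncomputable def inducedEdgeCount {V : Type*} (G : SimpleGraph V) (S : Set V) : ℕ :=
  Nat.card {e : Sym2 V // e ∈ G.edgeSet ∧ ∀ x ∈ e, x ∈ S}

/-- `η(G)`: the number of even sequences of `G`, i.e. orderings `π` of the vertices
such that every prefix induces a subgraph with an even number of edges. -/
noncomputable def eta (V : Type*) [Fintype V] (G : SimpleGraph V) : ℕ :=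
  Nat.card {π : Fin (Fintype.card V) ≃ V //
    ∀ i, Even (inducedEdgeCount G {v | ∃ j ≤ i, π j = v})}

open Finset

section Aux

variable {V : Type*} [Fintype V] [DecidableEq V]

lemma inducedEdgeCount_eq_ncard' (G : SimpleGraph V) (S : Set V) :
    Nat.card {e : Sym2 V // e ∈ G.edgeSet ∧ ∀ x ∈ e, x ∈ S} =
      {e : Sym2 V | e ∈ G.edgeSet ∧ ∀ x ∈ e, x ∈ S}.ncard := by
  rw [← Nat.card_coe_set_eq]
  rfl

lemma inducedEdgeCount_insert (G : SimpleGraph V) (S : Set V) (v : V) (hv : v ∉ S) :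
    Nat.card {e : Sym2 V // e ∈ G.edgeSet ∧ ∀ x ∈ e, x ∈ insert v S} =
      Nat.card {e : Sym2 V // e ∈ G.edgeSet ∧ ∀ x ∈ e, x ∈ S} +
        {u | u ∈ S ∧ G.Adj u v}.ncard := by
  classical
  rw [inducedEdgeCount_eq_ncard', inducedEdgeCount_eq_ncard']
  have hset : {e : Sym2 V | e ∈ G.edgeSet ∧ ∀ x ∈ e, x ∈ insert v S}
      = {e : Sym2 V | e ∈ G.edgeSet ∧ ∀ x ∈ e, x ∈ S} ∪
        ((fun u => s(u, v)) '' {u | u ∈ S ∧ G.Adj u v}) := by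
    apply Set.Subset.antisymm
    · rintro e ⟨he, hmem⟩
      induction e using Sym2.ind with
      | _ a b =>
        rw [SimpleGraph.mem_edgeSet] at he
        by_cases hva : a = v
        · subst hva
          have hb : b ∈ S := by
            rcases hmem b (Sym2.mem_mk_right _ _) with h | h
            · exact absurd h (G.ne_of_adj he).symm
            · exact h
          exact Or.inr ⟨b, ⟨hb, he.symm⟩, Sym2.eq_swap⟩
        · by_cases hvb : b = v
          · subst hvb
            have ha : a ∈ S := by
              rcases hmem a (Sym2.mem_mk_left _ _) with h | h
              · exact absurd h hva
              · exact h
            exact Or.inr ⟨a, ⟨ha, he⟩, rfl⟩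
          · refine Or.inl ⟨he, ?_⟩
            intro x hx
            rcases hmem x hx with h | h
            · rcases Sym2.mem_iff.mp hx with rfl | rfl
              · exact absurd h hva
              · exact absurd h hvb
            · exact h
    · rintro e (⟨he, hmem⟩ | ⟨u, ⟨hu, huv⟩, rfl⟩)
      · exact ⟨he, fun x hx => Set.mem_insert_iff.mpr (Or.inr (hmem x hx))⟩
      · refine ⟨huv, ?_⟩
        intro x hx
        rcases Sym2.mem_iff.mp hx with rfl | rfl
        · exact Set.mem_insert_iff.mpr (Or.inr hu)
        · exact Set.mem_insert_iff.mpr (Or.inl rfl)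
  have hinj : Function.Injective (fun u : V => s(u, v)) := by
    intro a b hab
    exact Sym2.congr_left.mp hab
  have hdisj : Disjoint {e : Sym2 V | e ∈ G.edgeSet ∧ ∀ x ∈ e, x ∈ S}
      ((fun u => s(u, v)) '' {u | u ∈ S ∧ G.Adj u v}) := by
    rw [Set.disjoint_left]
    rintro e ⟨he, hmem⟩ ⟨u, ⟨hu, huv⟩, rfl⟩
    exact hv (hmem v (Sym2.mem_mk_right _ _))
  rw [hset, Set.ncard_union_eq hdisj (Set.toFinite _) (Set.toFinite _),
    Set.ncard_image_of_injective _ hinj]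

lemma card_filter_equiv {α β : Type*} [Fintype α] [Fintype β] (e : α ≃ β)
    (P : β → Prop) [DecidablePred P] :
    #(univ.filter fun a => P (e a)) = #(univ.filter P) := by
  apply Finset.card_bij' (fun a _ => e a) (fun b _ => e.symm b) <;> simp

lemma range_even_card (m : ℕ) : #((Finset.range m).filter (fun x => Even x)) = (m + 1) / 2 := by
  induction m with
  | zero => simp
  | succ k ih =>
    rw [Finset.range_add_one, Finset.filter_insert]
    by_cases hk : Even k
    · rw [if_pos hk, Finset.card_insert_of_notMem (by simp)]
      obtain ⟨t, rfl⟩ := hk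
      omega
    · rw [if_neg hk]
      rw [Nat.not_even_iff] at hk
      omega

lemma fin_even_card (n : ℕ) : #((univ : Finset (Fin n)).filter fun t => Even t.val) = (n + 1) / 2 := by
  have : #((univ : Finset (Fin n)).filter fun t => Even t.val)
      = #((Finset.range n).filter (fun x => Even x)) := by
    apply Finset.card_bij' (fun (t : Fin n) _ => t.val)
      (fun m hm => (⟨m, Finset.mem_range.mp (Finset.mem_filter.mp hm).1⟩ : Fin n))
    all_goals intro a ha
    case hj =>
      simp only [Finset.mem_filter, Finset.mem_univ, true_and]
      exact (Finset.mem_filter.mp ha).2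
    all_goals simp_all [Finset.mem_filter]
  rw [this, range_even_card]

lemma fin_lt_card (n k : ℕ) (hk : k ≤ n) :
    #((univ : Finset (Fin n)).filter fun t => t.val < k) = k := by
  have : #((univ : Finset (Fin n)).filter fun t => t.val < k) = #(Finset.range k) := by
    apply Finset.card_bij' (fun (t : Fin n) _ => t.val)
      (fun m hm => (⟨m, lt_of_lt_of_le (Finset.mem_range.mp hm) hk⟩ : Fin n))
    all_goals intro a ha
    case hj =>
      simp only [Finset.mem_filter, Finset.mem_univ, true_and]
      exact Finset.mem_range.mp ha
    all_goals simp_all [Finset.mem_filter]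
  rw [this, Finset.card_range]

lemma rank_even_count {n : ℕ} (T : Finset (Fin n)) :
    (∀ t ∈ T, (Even t.val ↔ Even #(T.filter (· < t)))) →
    #(T.filter (fun t => Even t.val)) = (#T + 1) / 2 := by
  induction T using Finset.induction_on_max with
  | empty => intro _; simp
  | insert a s hmax ih =>
    intro h
    have ha : a ∉ s := fun h' => lt_irrefl a (hmax a h')
    have h1 : (insert a s).filter (· < a) = s := by
      rw [Finset.filter_insert, if_neg (lt_irrefl a)]
      exact Finset.filter_true_of_mem hmax
    have h2 : ∀ t ∈ s, (insert a s).filter (· < t) = s.filter (· < t) := by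
      intro t ht
      rw [Finset.filter_insert, if_neg (by exact fun hlt => absurd (hmax t ht) (asymm hlt))]
    have hs : #(s.filter (fun t => Even t.val)) = (#s + 1) / 2 := by
      apply ih
      intro t ht
      rw [← h2 t ht]
      exact h t (Finset.mem_insert_of_mem ht)
    have hA : Even a.val ↔ Even #s := by
      have := h a (Finset.mem_insert_self a s)
      rwa [h1] at this
    rw [Finset.filter_insert, Finset.card_insert_of_notMem ha]
    by_cases hev : Even a.val
    · rw [if_pos hev, Finset.card_insert_of_notMem (by simp [ha])]
      obtain ⟨t, ht⟩ := hA.mp hev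
      omega
    · rw [if_neg hev]
      have : ¬ Even #s := fun hc => hev (hA.mpr hc)
      rw [Nat.not_even_iff] at this
      omega

lemma final_arith {r : ℕ} (m : Fin r → ℕ) (i j : Fin r) (hij : i ≠ j)
    (hi : Odd (m i)) (hj : Odd (m j)) (n : ℕ) (hn : ∑ k, m k = n)
    (h : ∑ k, (m k + 1) / 2 = (n + 1) / 2) : False := by
  classical
  set g : Fin r → ℕ := fun k => 2 * ((m k + 1) / 2) with hg
  set m' : Fin r → ℕ := fun k =>
    m k + (if k = i then 1 else 0) + (if k = j then 1 else 0) with hm'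
  have hle : ∀ k, m' k ≤ g k := by
    intro k
    simp only [hm', hg]
    by_cases hki : k = i
    · subst hki
      rw [if_pos rfl, if_neg hij]
      obtain ⟨t, ht⟩ := hi
      omega
    · rw [if_neg hki]
      by_cases hkj : k = j
      · subst hkj
        rw [if_pos rfl]
        obtain ⟨t, ht⟩ := hj
        omega
      · rw [if_neg hkj]
        omega
  have hsum : ∑ k, m' k = n + 2 := by
    simp only [hm']
    rw [Finset.sum_add_distrib, Finset.sum_add_distrib, hn]
    rw [Finset.sum_ite_eq' univ i (fun _ => 1), Finset.sum_ite_eq' univ j (fun _ => 1)]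
    simp
  have h1 : ∑ k, m' k ≤ ∑ k, g k := Finset.sum_le_sum (fun k _ => hle k)
  rw [hsum] at h1
  have h2 : ∑ k, g k = 2 * ∑ k, (m k + 1) / 2 := by
    rw [Finset.mul_sum]
  rw [h2, h] at h1
  omega

end Aux

theorem stmt13 {V : Type*} [Fintype V] [DecidableEq V] (G : SimpleGraph V)
    (r : ℕ) (f : V → Fin r) (hG : ∀ u v, G.Adj u v ↔ f u ≠ f v)
    (i j : Fin r) (hij : i ≠ j)
    (hi : Odd (Nat.card {v // f v = i})) (hj : Odd (Nat.card {v // f v = j})) :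
    eta V G = 0 := by
  classical
  rw [eta]
  set n := Fintype.card V with hn
  suffices hIE : IsEmpty {π : Fin n ≃ V //
      ∀ i, Even (inducedEdgeCount G {v | ∃ j ≤ i, π j = v})} by
    exact Nat.card_of_isEmpty
  constructor
  rintro ⟨π, hπ⟩
  have hposinj : Function.Injective (fun v : V => π.symm v) := fun a b h => by
    simpa using congrArg π h
  set U : ℕ → Set V := fun k => {w | ((π.symm w : Fin n) : ℕ) < k} with hU
  have hprefix : ∀ i : Fin n, {v | ∃ j ≤ i, π j = v} = U ((i : ℕ) + 1) := by
    intro i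
    ext w
    simp only [hU, Set.mem_setOf_eq]
    constructor
    · rintro ⟨j0, hj0, rfl⟩
      rw [Equiv.symm_apply_apply]
      exact Nat.lt_succ_of_le (Fin.le_def.mp hj0)
    · intro hw
      exact ⟨π.symm w, Fin.le_def.mpr (by omega), by simp⟩
  have hUeven : ∀ k, k ≤ n → Even (inducedEdgeCount G (U k)) := by
    intro k hk
    match k with
    | 0 =>
      have hU0 : U 0 = ∅ := by ext w; simp [hU]
      rw [hU0]
      have hz : inducedEdgeCount G (∅ : Set V) = 0 := by
        rw [inducedEdgeCount, Nat.card_eq_zero]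
        left
        constructor
        rintro ⟨e, he, hmem⟩
        induction e using Sym2.ind with
        | _ a b => exact (hmem a (Sym2.mem_mk_left _ _))
      rw [hz]
      exact Even.zero
    | (m+1) =>
      have h := hπ ⟨m, by omega⟩
      rwa [hprefix ⟨m, by omega⟩] at h
  have hstepins : ∀ (k : ℕ) (hk : k < n), U (k+1) = insert (π ⟨k, hk⟩) (U k) := by
    intro k hk
    ext w
    simp only [hU, Set.mem_setOf_eq, Set.mem_insert_iff]
    constructor
    · intro hw
      rcases Nat.lt_succ_iff_lt_or_eq.mp hw with h | h
      · exact Or.inr h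
      · left
        have h2 : π.symm w = ⟨k, hk⟩ := Fin.ext h
        have h3 := congrArg π h2
        simp only [Equiv.apply_symm_apply] at h3
        exact h3
    · rintro (rfl | h)
      · rw [Equiv.symm_apply_apply]
        exact Nat.lt_succ_self k
      · omega
  have hnotmem : ∀ (k : ℕ) (hk : k < n), π ⟨k, hk⟩ ∉ U k := by
    intro k hk h
    simp only [hU, Set.mem_setOf_eq, Equiv.symm_apply_apply] at h
    exact lt_irrefl k h
  have hinc : ∀ (k : ℕ) (hk : k < n),
      Even ({u | u ∈ U k ∧ G.Adj u (π ⟨k, hk⟩)}.ncard) := by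
    intro k hk
    have heq := inducedEdgeCount_insert G (U k) (π ⟨k, hk⟩) (hnotmem k hk)
    have h1 : inducedEdgeCount G (U (k+1)) =
        inducedEdgeCount G (U k) + {u | u ∈ U k ∧ G.Adj u (π ⟨k, hk⟩)}.ncard := by
      rw [hstepins k hk]
      exact heq
    have e1 := hUeven (k+1) hk
    have e2 := hUeven k (le_of_lt hk)
    rw [h1, Nat.even_add] at e1
    exact e1.mp e2
  have hparity : ∀ (k : ℕ) (hk : k < n),
      Even #(Finset.univ.filter fun u =>
        ((π.symm u : Fin n) : ℕ) < k ∧ f u ≠ f (π ⟨k, hk⟩)) := by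
    intro k hk
    have h := hinc k hk
    have hseq : {u | u ∈ U k ∧ G.Adj u (π ⟨k, hk⟩)} =
        ↑(Finset.univ.filter fun u =>
          ((π.symm u : Fin n) : ℕ) < k ∧ f u ≠ f (π ⟨k, hk⟩)) := by
      ext u
      simp [hU, hG, Set.mem_setOf_eq]
    rwa [hseq, Set.ncard_coe_finset] at h
  have hP2 : ∀ v : V, ((π.symm v : Fin n) : ℕ) % 2 =
      #(Finset.univ.filter fun u =>
        ((π.symm u : Fin n) : ℕ) < ((π.symm v : Fin n) : ℕ) ∧ f u = f v) % 2 := by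
    intro v
    have hk : ((π.symm v : Fin n) : ℕ) < n := (π.symm v).isLt
    have hv : π ⟨((π.symm v : Fin n) : ℕ), hk⟩ = v := by
      have h2 : (⟨((π.symm v : Fin n) : ℕ), hk⟩ : Fin n) = π.symm v := Fin.ext rfl
      rw [h2]
      simp
    have h1 := hparity ((π.symm v : Fin n) : ℕ) hk
    rw [hv] at h1
    have hsplit :
        #(Finset.univ.filter fun u =>
          ((π.symm u : Fin n) : ℕ) < ((π.symm v : Fin n) : ℕ) ∧ f u = f v) +
        #(Finset.univ.filter fun u =>
          ((π.symm u : Fin n) : ℕ) < ((π.symm v : Fin n) : ℕ) ∧ f u ≠ f v) =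
        #(Finset.univ.filter fun u =>
          ((π.symm u : Fin n) : ℕ) < ((π.symm v : Fin n) : ℕ)) := by
      rw [← Finset.filter_filter, ← Finset.filter_filter,
        Finset.card_filter_add_card_filter_not]
    have htot : #(Finset.univ.filter fun u =>
        ((π.symm u : Fin n) : ℕ) < ((π.symm v : Fin n) : ℕ)) = ((π.symm v : Fin n) : ℕ) := by
      rw [card_filter_equiv π.symm (fun t : Fin n => (t : ℕ) < ((π.symm v : Fin n) : ℕ))]
      exact fin_lt_card n _ (le_of_lt hk)
    obtain ⟨c, hc⟩ := h1
    omega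
  have hTk : ∀ k : Fin r,
      #((((Finset.univ.filter fun v => f v = k)).image (fun v => π.symm v)).filter
          fun t : Fin n => Even (t : ℕ)) =
        (#(((Finset.univ.filter fun v => f v = k)).image (fun v => π.symm v)) + 1) / 2 := by
    intro k
    apply rank_even_count
    intro t ht
    obtain ⟨v, hv, rfl⟩ := Finset.mem_image.mp ht
    have hfv : f v = k := (Finset.mem_filter.mp hv).2
    have hfil : (((Finset.univ.filter fun v => f v = k)).image (fun v => π.symm v)).filter
          (· < π.symm v)
        = (Finset.univ.filter fun u =>
            ((π.symm u : Fin n) : ℕ) < ((π.symm v : Fin n) : ℕ) ∧ f u = k).image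
          (fun v => π.symm v) := by
      ext s
      simp only [Finset.mem_filter, Finset.mem_image, Finset.mem_univ, true_and]
      constructor
      · rintro ⟨⟨u, hu, rfl⟩, hlt⟩
        exact ⟨u, ⟨Fin.lt_def.mp hlt, hu⟩, rfl⟩
      · rintro ⟨u, ⟨hlt, hu⟩, rfl⟩
        exact ⟨⟨u, hu, rfl⟩, Fin.lt_def.mpr hlt⟩
    rw [hfil, Finset.card_image_of_injective _ hposinj]
    have h2 := hP2 v
    rw [hfv] at h2
    rw [Nat.even_iff, Nat.even_iff, h2]
  have hTcard : ∀ k : Fin r,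
      #(((Finset.univ.filter fun v => f v = k)).image (fun v => π.symm v))
        = Nat.card {v // f v = k} := by
    intro k
    rw [Finset.card_image_of_injective _ hposinj, Nat.card_eq_fintype_card,
      Fintype.card_subtype]
  have hsum1 : ∀ k : Fin r,
      #((((Finset.univ.filter fun v => f v = k)).image (fun v => π.symm v)).filter
          fun t : Fin n => Even (t : ℕ))
        = #(Finset.univ.filter fun v => Even ((π.symm v : Fin n) : ℕ) ∧ f v = k) := by
    intro k
    have heq : (((Finset.univ.filter fun v => f v = k)).image (fun v => π.symm v)).filter
          (fun t : Fin n => Even (t : ℕ))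
        = (Finset.univ.filter fun v =>
            Even ((π.symm v : Fin n) : ℕ) ∧ f v = k).image (fun v => π.symm v) := by
      ext s
      simp only [Finset.mem_filter, Finset.mem_image, Finset.mem_univ, true_and]
      constructor
      · rintro ⟨⟨u, hu, rfl⟩, hev⟩
        exact ⟨u, ⟨hev, hu⟩, rfl⟩
      · rintro ⟨u, ⟨hev, hu⟩, rfl⟩
        exact ⟨⟨u, hu, rfl⟩, hev⟩
    rw [heq, Finset.card_image_of_injective _ hposinj]
  have hsum2 : ∑ k : Fin r,
      #(Finset.univ.filter fun v => Even ((π.symm v : Fin n) : ℕ) ∧ f v = k)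
      = #(Finset.univ.filter fun v => Even ((π.symm v : Fin n) : ℕ)) := by
    have hfib := Finset.card_eq_sum_card_fiberwise (f := f)
      (s := Finset.univ.filter fun v => Even ((π.symm v : Fin n) : ℕ))
      (t := (Finset.univ : Finset (Fin r))) (fun x _ => Finset.mem_univ _)
    rw [hfib]
    apply Finset.sum_congr rfl
    intro k _
    rw [Finset.filter_filter]
  have hsum3 : #(Finset.univ.filter fun v => Even ((π.symm v : Fin n) : ℕ)) = (n + 1) / 2 := by
    rw [card_filter_equiv π.symm (fun t : Fin n => Even (t : ℕ)), fin_even_card]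
  have hfinal : ∑ k : Fin r, (Nat.card {v // f v = k} + 1) / 2 = (n + 1) / 2 := by
    calc ∑ k : Fin r, (Nat.card {v // f v = k} + 1) / 2
        = ∑ k : Fin r,
            (#(((Finset.univ.filter fun v => f v = k)).image (fun v => π.symm v)) + 1) / 2 :=
          Finset.sum_congr rfl (fun k _ => by rw [hTcard k])
      _ = ∑ k : Fin r,
            #((((Finset.univ.filter fun v => f v = k)).image (fun v => π.symm v)).filter
              fun t : Fin n => Even (t : ℕ)) :=
          Finset.sum_congr rfl (fun k _ => (hTk k).symm)
      _ = ∑ k : Fin r,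
            #(Finset.univ.filter fun v => Even ((π.symm v : Fin n) : ℕ) ∧ f v = k) :=
          Finset.sum_congr rfl (fun k _ => hsum1 k)
      _ = (n + 1) / 2 := by rw [hsum2, hsum3]
  have hntot : ∑ k : Fin r, Nat.card {v // f v = k} = n := by
    have hfib := Finset.card_eq_sum_card_fiberwise (f := f)
      (s := (Finset.univ : Finset V)) (t := (Finset.univ : Finset (Fin r)))
      (fun x _ => Finset.mem_univ _)
    rw [Finset.card_univ] at hfib
    calc ∑ k : Fin r, Nat.card {v // f v = k}
        = ∑ k : Fin r, #(Finset.univ.filter fun v => f v = k) :=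
          Finset.sum_congr rfl (fun k _ => by
            rw [Nat.card_eq_fintype_card, Fintype.card_subtype])
      _ = n := hfib.symm
  exact final_arith (fun k => Nat.card {v // f v = k}) i j hij hi hj n hntot hfinal
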